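/- Let q be a prime power and S a subspace of GF(q)^n such that two coordinates i and j are in series in Matroid(S) (every circuit containing i also contains j and vice versa), and let S' be the projection of S obtained by dropping coordinate j. Then mult(S) is ideal if and only if mult(S') is ideal. -/

import Mathlib

open scoped Classical
noncomputable section

/-- Membership in the set covering polyhedron `Q(C)`. -/
def MemQ {V : Type*} (C : Finset (Finset V)) (x : V → ℝ) : Prop :=
  (∀ v, 0 ≤ x v) ∧ ∀ A ∈ C, 1 ≤ ∑ v ∈ A, x v

/-- An extreme point of `Q(C)`. -/
def IsExtremePt {V : Type*} (C : Finset (Finset V)) (x : V → ℝ) : Prop :=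
  MemQ C x ∧ ∀ y z : V → ℝ, MemQ C y → MemQ C z →
    (x = fun v => (y v + z v) / 2) → y = z

/-- A clutter is ideal if every extreme point of `Q(C)` is integral. -/
def IdealClutter {V : Type*} (C : Finset (Finset V)) : Prop :=
  ∀ x : V → ℝ, IsExtremePt C x → ∀ v, ∃ k : ℤ, x v = (k : ℝ)

/-- The support of a vector. -/
def suppF {ι : Type*} [Fintype ι] {F : Type*} [Zero F] (x : ι → F) : Finset ι :=
  Finset.univ.filter fun i => x i ≠ 0

/-- The circuits of `Matroid(S)`: the minimal supports of nonzero vectors of `S`. -/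
def circuitSet {F : Type*} [Field F] {ι : Type*} [Fintype ι] (S : Submodule F (ι → F)) :
    Set (Finset ι) :=
  {C | (∃ x ∈ S, x ≠ 0 ∧ suppF x = C) ∧
       ∀ C', (∃ x ∈ S, x ≠ 0 ∧ suppF x = C') → C' ⊆ C → C' = C}

/-- The multipartite uniform clutter of a subspace. -/
def multSub {F : Type*} [Field F] [Fintype F] {ι : Type*} [Fintype ι]
    (S : Submodule F (ι → F)) : Finset (Finset (Σ _ : ι, F)) :=
  (Finset.univ.filter fun x : ι → F => x ∈ S).image
    fun x => Finset.univ.image fun i => (⟨i, x i⟩ : Σ _ : ι, F)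

lemma mem_suppF {ι : Type*} [Fintype ι] {F : Type*} [Zero F] {x : ι → F} {k : ι} :
    k ∈ suppF x ↔ x k ≠ 0 := by simp [suppF]

lemma key {F : Type*} [Field F] {ι : Type*} [Fintype ι] (S : Submodule F (ι → F)) :
    ∀ m : ℕ, ∀ x : ι → F, x ∈ S → (suppF x).card = m → ∀ k, x k ≠ 0 →
      ∃ C ∈ circuitSet S, k ∈ C ∧ C ⊆ suppF x := by
  intro m
  induction m using Nat.strong_induction_on with
  | _ m ih =>
    intro x hxS hcard k hk
    by_cases hmin : ∀ C', (∃ z ∈ S, z ≠ 0 ∧ suppF z = C') → C' ⊆ suppF x → C' = suppF x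
    · exact ⟨suppF x, ⟨⟨x, hxS, fun h => hk (by simp [h]), rfl⟩, hmin⟩,
        mem_suppF.2 hk, subset_rfl⟩
    · push_neg at hmin
      obtain ⟨C', ⟨y, hyS, hy0, hysupp⟩, hsub, hne⟩ := hmin
      subst hysupp
      have hss : suppF y ⊂ suppF x := hsub.ssubset_of_ne hne
      by_cases hky : y k ≠ 0
      · obtain ⟨C, hC, hkC, hCs⟩ := ih (suppF y).card
          (hcard ▸ Finset.card_lt_card hss) y hyS rfl k hky
        exact ⟨C, hC, hkC, hCs.trans hsub⟩
      · push_neg at hky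
        obtain ⟨mm, hmm⟩ : ∃ mm, y mm ≠ 0 := by
          by_contra h; push_neg at h; exact hy0 (funext fun l => h l)
        set z : ι → F := x - (x mm * (y mm)⁻¹) • y with hz
        have hzS : z ∈ S := S.sub_mem hxS (S.smul_mem _ hyS)
        have hzk : z k ≠ 0 := by
          simp only [hz, Pi.sub_apply, Pi.smul_apply, smul_eq_mul, hky, mul_zero, sub_zero]
          exact hk
        have hzmm : z mm = 0 := by
          simp only [hz, Pi.sub_apply, Pi.smul_apply, smul_eq_mul]
          field_simp
          simp
        have hzsub : suppF z ⊆ suppF x := by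
          intro l hl
          rw [mem_suppF] at hl ⊢
          intro hxl
          apply hl
          by_cases hyl : y l = 0
          · simp [hz, hxl, hyl]
          · have : l ∈ suppF x := hsub (mem_suppF.2 hyl)
            exact absurd hxl (mem_suppF.1 this)
        have hzss : suppF z ⊂ suppF x := by
          refine hzsub.ssubset_of_ne ?_
          intro h
          have : mm ∈ suppF z := h ▸ hsub (mem_suppF.2 hmm)
          exact (mem_suppF.1 this) hzmm
        obtain ⟨C, hC, hkC, hCs⟩ := ih (suppF z).card
          (hcard ▸ Finset.card_lt_card hzss) z hzS rfl k hzk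
        exact ⟨C, hC, hkC, hCs.trans hzsub⟩

lemma lambda_exists {F : Type*} [Field F] {n : ℕ} (S : Submodule F (Fin n → F))
    (i j : Fin n)
    (hseries : ∀ C ∈ circuitSet S, i ∈ C ↔ j ∈ C) :
    ∃ lam : F, lam ≠ 0 ∧ ∀ x ∈ S, x j = lam * x i := by
  by_cases hA : ∀ x ∈ S, x i = 0
  · refine ⟨1, one_ne_zero, fun x hx => ?_⟩
    rw [hA x hx, mul_zero]
    by_contra hxj
    obtain ⟨C, hC, hjC, hCs⟩ := key S (suppF x).card x hx rfl j hxj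
    have hiC : i ∈ C := (hseries C hC).2 hjC
    obtain ⟨⟨y, hyS, hy0, hys⟩, _⟩ := hC
    exact (mem_suppF.1 (hys ▸ hiC)) (hA y hyS)
  · push_neg at hA
    obtain ⟨w, hwS, hwi⟩ := hA
    obtain ⟨C, hC, hiC, _⟩ := key S (suppF w).card w hwS rfl i hwi
    have hjC : j ∈ C := (hseries C hC).1 hiC
    obtain ⟨⟨y, hyS, hy0, hys⟩, -⟩ := hC
    have hyi : y i ≠ 0 := mem_suppF.1 (hys ▸ hiC)
    have hyj : y j ≠ 0 := mem_suppF.1 (hys ▸ hjC)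
    refine ⟨y j * (y i)⁻¹, by simp [hyj, hyi], fun x hx => ?_⟩
    set z : Fin n → F := x - (x i * (y i)⁻¹) • y with hz
    have hzS : z ∈ S := S.sub_mem hx (S.smul_mem _ hyS)
    have hzi : z i = 0 := by
      simp only [hz, Pi.sub_apply, Pi.smul_apply, smul_eq_mul]; field_simp; simp
    have hzj : z j = 0 := by
      by_contra hzj
      obtain ⟨C', hC', hjC', hCs'⟩ := key S (suppF z).card z hzS rfl j hzj
      have hiC' : i ∈ C' := (hseries C' hC').2 hjC'
      exact (mem_suppF.1 (hCs' hiC')) hzi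
    have hzj' : x j - x i * (y i)⁻¹ * y j = 0 := by
      simpa only [hz, Pi.sub_apply, Pi.smul_apply, smul_eq_mul] using hzj
    have : x j = x i * (y i)⁻¹ * y j := by linear_combination hzj'
    rw [this]; ring

lemma mem_multSub {F : Type*} [Field F] [Fintype F] {ι : Type*} [Fintype ι]
    {S : Submodule F (ι → F)} {A : Finset (Σ _ : ι, F)} :
    A ∈ multSub S ↔ ∃ x, x ∈ S ∧ A = Finset.univ.image fun k => (⟨k, x k⟩ : Σ _ : ι, F) := by
  simp only [multSub, Finset.mem_image, Finset.mem_filter, Finset.mem_univ, true_and]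
  exact ⟨fun ⟨x, h1, h2⟩ => ⟨x, h1, h2.symm⟩, fun ⟨x, h1, h2⟩ => ⟨x, h1, h2.symm⟩⟩

lemma memQ_multSub {F : Type*} [Field F] [Fintype F] {ι : Type*} [Fintype ι]
    (S : Submodule F (ι → F)) (x : (Σ _ : ι, F) → ℝ) :
    MemQ (multSub S) x ↔ ((∀ v, 0 ≤ x v) ∧ ∀ w ∈ S, 1 ≤ ∑ k, x ⟨k, w k⟩) := by
  unfold MemQ
  constructor
  · rintro ⟨h0, h1⟩
    refine ⟨h0, fun w hw => ?_⟩
    have := h1 _ (mem_multSub.2 ⟨w, hw, rfl⟩)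
    rwa [Finset.sum_image (fun a _ b _ h => congrArg Sigma.fst h)] at this
  · rintro ⟨h0, h1⟩
    refine ⟨h0, fun A hA => ?_⟩
    obtain ⟨w, hw, rfl⟩ := mem_multSub.1 hA
    rw [Finset.sum_image (fun a _ b _ h => congrArg Sigma.fst h)]
    exact h1 w hw

lemma mem_proj {F : Type*} [Field F] {n : ℕ} {S : Submodule F (Fin n → F)} {j : Fin n}
    {y : {k : Fin n // k ≠ j} → F} :
    y ∈ S.map (LinearMap.funLeft F F (Subtype.val : {k : Fin n // k ≠ j} → Fin n)) ↔
      ∃ x, x ∈ S ∧ y = fun k => x k.val := by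
  simp only [Submodule.mem_map, LinearMap.funLeft_apply]
  constructor
  · rintro ⟨x, hx, rfl⟩; exact ⟨x, hx, rfl⟩
  · rintro ⟨x, hx, rfl⟩; exact ⟨x, hx, rfl⟩

lemma memQ_proj {F : Type*} [Field F] [Fintype F] {n : ℕ} (S : Submodule F (Fin n → F))
    (j : Fin n) (y : (Σ _ : {k : Fin n // k ≠ j}, F) → ℝ) :
    MemQ (multSub (S.map (LinearMap.funLeft F F
        (Subtype.val : {k : Fin n // k ≠ j} → Fin n)))) y ↔
      ((∀ v, 0 ≤ y v) ∧ ∀ w ∈ S, 1 ≤ ∑ k : {k : Fin n // k ≠ j}, y ⟨k, w k.val⟩) := by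
  rw [memQ_multSub]
  refine and_congr_right fun _ => ⟨fun h w hw => h _ (mem_proj.2 ⟨w, hw, rfl⟩), ?_⟩
  intro h w' hw'
  obtain ⟨w, hw, rfl⟩ := mem_proj.1 hw'
  exact h w hw

lemma sum_split {n : ℕ} (j : Fin n) (f : Fin n → ℝ) :
    ∑ k, f k = (∑ k : {k : Fin n // k ≠ j}, f k.val) + f j := by
  rw [← Finset.sum_erase_add Finset.univ f (Finset.mem_univ j)]
  congr 1
  exact (Finset.sum_subtype (Finset.univ.erase j) (fun x => by simp) f)

lemma sigma_snd {ι : Type*} {F : Type*} {k : ι} {a b : F}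
    (h : (⟨k, a⟩ : Σ _ : ι, F) = ⟨k, b⟩) : a = b := by
  simpa using h

lemma dir1 {F : Type*} [Field F] [Fintype F] {n : ℕ} (S : Submodule F (Fin n → F))
    (j : Fin n)
    (h : IdealClutter (multSub S)) :
    IdealClutter (multSub
      (S.map (LinearMap.funLeft F F (Subtype.val : {k : Fin n // k ≠ j} → Fin n)))) := by
  intro y hy v
  set X : (Σ _ : Fin n, F) → ℝ :=
    fun v => if h : v.1 = j then 0 else y ⟨⟨v.1, h⟩, v.2⟩ with hX
  have hXval : ∀ (k : {k : Fin n // k ≠ j}) (c : F), X ⟨k.val, c⟩ = y ⟨k, c⟩ := by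
    rintro ⟨k, hk⟩ c
    simp only [hX, dif_neg hk]
  have hXj : ∀ c : F, X ⟨j, c⟩ = 0 := fun c => by simp [hX]
  have hym := (memQ_proj S j y).1 hy.1
  have hXmem : MemQ (multSub S) X := by
    rw [memQ_multSub]
    constructor
    · rintro ⟨k, c⟩
      by_cases hk : k = j
      · subst hk; rw [hXj]
      · rw [show (⟨k, c⟩ : Σ _ : Fin n, F) = ⟨(⟨k, hk⟩ : {k : Fin n // k ≠ j}).val, c⟩ from rfl,
          hXval]
        exact hym.1 _
    · intro w hw
      rw [sum_split j (fun k => X ⟨k, w k⟩)]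
      simp only [hXj, add_zero]
      calc (1:ℝ) ≤ ∑ k : {k : Fin n // k ≠ j}, y ⟨k, w k.val⟩ := hym.2 w hw
        _ = ∑ k : {k : Fin n // k ≠ j}, X ⟨k.val, w k.val⟩ :=
          Finset.sum_congr rfl fun k _ => (hXval k (w k.val)).symm
  have hXext : IsExtremePt (multSub S) X := by
    refine ⟨hXmem, fun u w hu hw huw => ?_⟩
    have hzero : ∀ c : F, u ⟨j, c⟩ = 0 ∧ w ⟨j, c⟩ = 0 := by
      intro c
      have h0 : (u ⟨j, c⟩ + w ⟨j, c⟩) / 2 = 0 := by rw [← hXj c, huw]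
      have h1 := hu.1 ⟨j, c⟩
      have h2 := hw.1 ⟨j, c⟩
      constructor <;> linarith
    have restr : ∀ (z : (Σ _ : Fin n, F) → ℝ), MemQ (multSub S) z → (∀ c, z ⟨j, c⟩ = 0) →
        MemQ (multSub (S.map (LinearMap.funLeft F F
          (Subtype.val : {k : Fin n // k ≠ j} → Fin n))))
          (fun v => z ⟨v.1.val, v.2⟩) := by
      intro z hz hzj
      rw [memQ_proj]
      refine ⟨fun v => ((memQ_multSub S z).1 hz).1 _, fun x hx => ?_⟩
      have := ((memQ_multSub S z).1 hz).2 x hx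
      rw [sum_split j (fun k => z ⟨k, x k⟩), hzj, add_zero] at this
      exact this
    have hu'm := restr u hu (fun c => (hzero c).1)
    have hw'm := restr w hw (fun c => (hzero c).2)
    have heq : (fun v : Σ _ : {k : Fin n // k ≠ j}, F => u ⟨v.1.val, v.2⟩)
        = (fun v => w ⟨v.1.val, v.2⟩) := by
      refine hy.2 _ _ hu'm hw'm ?_
      funext v
      have := congrFun huw ⟨v.1.val, v.2⟩
      rw [hXval v.1 v.2] at this
      exact this
    funext v
    obtain ⟨k, c⟩ := v
    by_cases hk : k = j
    · subst hk; rw [(hzero c).1, (hzero c).2]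
    · exact congrFun heq ⟨⟨k, hk⟩, c⟩
  obtain ⟨k, c⟩ := v
  obtain ⟨m, hm⟩ := h X hXext ⟨k.val, c⟩
  exact ⟨m, by rw [← hXval k c]; exact hm⟩

lemma dir2 {F : Type*} [Field F] [Fintype F] {n : ℕ} (S : Submodule F (Fin n → F))
    (i j : Fin n) (hij : i ≠ j) (lam : F) (hlam0 : lam ≠ 0)
    (hlam : ∀ x ∈ S, x j = lam * x i)
    (h' : IdealClutter (multSub
      (S.map (LinearMap.funLeft F F (Subtype.val : {k : Fin n // k ≠ j} → Fin n))))) :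
    IdealClutter (multSub S) := by
  intro x hx v
  have hxm := (memQ_multSub S x).1 hx.1
  -- dichotomy for extreme points
  have dich : ∀ c : F, x ⟨i, c⟩ = 0 ∨ x ⟨j, lam * c⟩ = 0 := by
    intro c
    by_contra hcon
    push_neg at hcon
    obtain ⟨ha, hb⟩ := hcon
    have ha' : 0 < x ⟨i, c⟩ := lt_of_le_of_ne (hxm.1 _) (Ne.symm ha)
    have hb' : 0 < x ⟨j, lam * c⟩ := lt_of_le_of_ne (hxm.1 _) (Ne.symm hb)
    set ε : ℝ := min (x ⟨i, c⟩) (x ⟨j, lam * c⟩) with hε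
    have hε0 : 0 < ε := lt_min ha' hb'
    have hne : (⟨i, c⟩ : Σ _ : Fin n, F) ≠ ⟨j, lam * c⟩ := by
      intro h; exact hij (congrArg Sigma.fst h)
    set d : (Σ _ : Fin n, F) → ℝ := fun v =>
      (if v = ⟨i, c⟩ then ε else 0) - (if v = ⟨j, lam * c⟩ then ε else 0) with hd
    have hdi : d ⟨i, c⟩ = ε := by
      rw [hd]; dsimp only; rw [if_pos rfl, if_neg hne]; ring
    have hdj : d ⟨j, lam * c⟩ = -ε := by
      rw [hd]; dsimp only
      rw [if_pos rfl, if_neg (fun h => hij (congrArg Sigma.fst h).symm)]; ring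
    have hd0 : ∀ u : Σ _ : Fin n, F, u ≠ ⟨i, c⟩ → u ≠ ⟨j, lam * c⟩ → d u = 0 := by
      intro u h1 h2
      rw [hd]; dsimp only; rw [if_neg h1, if_neg h2]; ring
    have hdsum : ∀ w ∈ S, ∑ k, d ⟨k, w k⟩ = 0 := by
      intro w hw
      have e1 : ∀ k : Fin n, (if (⟨k, w k⟩ : Σ _ : Fin n, F) = ⟨i, c⟩ then ε else 0)
          = if k = i then (if w i = c then ε else 0) else 0 := by
        intro k
        by_cases hk : k = i
        · subst hk
          by_cases hwc : w k = c
          · rw [if_pos (by rw [hwc]), if_pos rfl, if_pos hwc]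
          · rw [if_neg (fun h => hwc (sigma_snd h)), if_pos rfl, if_neg hwc]
        · rw [if_neg (fun h => hk (congrArg Sigma.fst h)), if_neg hk]
      have e2 : ∀ k : Fin n, (if (⟨k, w k⟩ : Σ _ : Fin n, F) = ⟨j, lam * c⟩ then ε else 0)
          = if k = j then (if w j = lam * c then ε else 0) else 0 := by
        intro k
        by_cases hk : k = j
        · subst hk
          by_cases hwc : w k = lam * c
          · rw [if_pos (by rw [hwc]), if_pos rfl, if_pos hwc]
          · rw [if_neg (fun h => hwc (sigma_snd h)), if_pos rfl, if_neg hwc]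
        · rw [if_neg (fun h => hk (congrArg Sigma.fst h)), if_neg hk]
      have hiff : (w i = c) ↔ (w j = lam * c) := by
        rw [hlam w hw]
        exact ⟨fun h => by rw [h], fun h => mul_left_cancel₀ hlam0 h⟩
      simp only [hd, Finset.sum_sub_distrib]
      rw [Finset.sum_congr rfl fun k _ => e1 k, Finset.sum_congr rfl fun k _ => e2 k,
        Finset.sum_ite_eq' Finset.univ i, Finset.sum_ite_eq' Finset.univ j]
      simp only [Finset.mem_univ, if_true]
      by_cases hwc : w i = c
      · rw [if_pos hwc, if_pos (hiff.1 hwc), sub_self]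
      · rw [if_neg hwc, if_neg (fun h => hwc (hiff.2 h)), sub_self]
    have hmem : ∀ s : ℝ, s = 1 ∨ s = -1 → MemQ (multSub S) (fun v => x v + s * d v) := by
      intro s hs
      rw [memQ_multSub]
      constructor
      · intro u
        by_cases h1 : u = ⟨i, c⟩
        · subst h1
          rw [hdi]
          have := min_le_left (x ⟨i, c⟩) (x ⟨j, lam * c⟩)
          rcases hs with rfl | rfl <;> [linarith; (rw [hε] at *; linarith)]
        · by_cases h2 : u = ⟨j, lam * c⟩
          · subst h2
            rw [hdj]
            have := min_le_right (x ⟨i, c⟩) (x ⟨j, lam * c⟩)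
            rcases hs with rfl | rfl <;> [(rw [hε] at *; linarith); linarith]
          · rw [hd0 u h1 h2, mul_zero, add_zero]
            exact hxm.1 u
      · intro w hw
        have : ∑ k, (x ⟨k, w k⟩ + s * d ⟨k, w k⟩)
            = ∑ k, x ⟨k, w k⟩ + s * ∑ k, d ⟨k, w k⟩ := by
          rw [Finset.sum_add_distrib, Finset.mul_sum]
        rw [this, hdsum w hw, mul_zero, add_zero]
        exact hxm.2 w hw
    have huw : (fun v => x v + 1 * d v) = (fun v => x v + (-1) * d v) :=
      hx.2 _ _ (hmem 1 (Or.inl rfl)) (hmem (-1) (Or.inr rfl)) (funext fun v => by ring)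
    have := congrFun huw ⟨i, c⟩
    rw [hdi] at this
    simp only [one_mul, neg_one_mul] at this
    linarith
  -- the projected point
  set Y : (Σ _ : {k : Fin n // k ≠ j}, F) → ℝ :=
    fun v => if v.1.val = i then x ⟨i, v.2⟩ + x ⟨j, lam * v.2⟩ else x ⟨v.1.val, v.2⟩ with hY
  have hYi : ∀ (c : F) (h : i ≠ j), Y ⟨⟨i, h⟩, c⟩ = x ⟨i, c⟩ + x ⟨j, lam * c⟩ := by
    intro c h
    show (if i = i then x ⟨i, c⟩ + x ⟨j, lam * c⟩ else x ⟨i, c⟩) = x ⟨i, c⟩ + x ⟨j, lam * c⟩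
    rw [if_pos rfl]
  have hYk : ∀ (k : {k : Fin n // k ≠ j}), k.val ≠ i → ∀ c : F, Y ⟨k, c⟩ = x ⟨k.val, c⟩ := by
    intro k hk c; rw [hY]; dsimp only; rw [if_neg hk]
  have hYsum : ∀ w ∈ S, (∑ k : {k : Fin n // k ≠ j}, Y ⟨k, w k.val⟩) = ∑ k, x ⟨k, w k⟩ := by
    intro w hw
    have e : ∀ k : {k : Fin n // k ≠ j}, Y ⟨k, w k.val⟩
        = x ⟨k.val, w k.val⟩
          + (if k = (⟨i, hij⟩ : {k : Fin n // k ≠ j}) then x ⟨j, w j⟩ else 0) := by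
      intro k
      by_cases hk : k = ⟨i, hij⟩
      · rw [hk]
        show Y ⟨⟨i, hij⟩, w i⟩ = x ⟨i, w i⟩
          + (if (⟨i, hij⟩ : {k : Fin n // k ≠ j}) = ⟨i, hij⟩ then x ⟨j, w j⟩ else 0)
        rw [hYi (w i) hij, if_pos rfl, ← hlam w hw]
      · have hkv : k.val ≠ i := fun h => hk (Subtype.ext h)
        rw [hYk k hkv, if_neg hk, add_zero]
    simp only [e]
    rw [Finset.sum_add_distrib, Finset.sum_ite_eq' Finset.univ]
    simp only [Finset.mem_univ, if_true]
    rw [sum_split j (fun k => x ⟨k, w k⟩)]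
  have hYmem : MemQ (multSub (S.map (LinearMap.funLeft F F
      (Subtype.val : {k : Fin n // k ≠ j} → Fin n)))) Y := by
    rw [memQ_proj]
    refine ⟨fun v => ?_, fun w hw => ?_⟩
    · rw [hY]; dsimp only
      split
      · exact add_nonneg (hxm.1 _) (hxm.1 _)
      · exact hxm.1 _
    · rw [hYsum w hw]; exact hxm.2 w hw
  -- lifting map
  set L : ((Σ _ : {k : Fin n // k ≠ j}, F) → ℝ) → ((Σ _ : Fin n, F) → ℝ) :=
    fun u v =>
      if hvj : v.1 = j then (if x ⟨j, v.2⟩ = 0 then 0 else u ⟨⟨i, hij⟩, lam⁻¹ * v.2⟩)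
      else if v.1 = i then (if x ⟨j, lam * v.2⟩ = 0 then u ⟨⟨v.1, hvj⟩, v.2⟩ else 0)
      else u ⟨⟨v.1, hvj⟩, v.2⟩ with hL
  have hLj : ∀ u (d : F), L u ⟨j, d⟩
      = if x ⟨j, d⟩ = 0 then 0 else u ⟨⟨i, hij⟩, lam⁻¹ * d⟩ := by
    intro u d; rw [hL]; dsimp only; rw [dif_pos rfl]
  have hLi : ∀ u (c : F), L u ⟨i, c⟩
      = if x ⟨j, lam * c⟩ = 0 then u ⟨⟨i, hij⟩, c⟩ else 0 := by
    intro u c; rw [hL]; dsimp only; rw [dif_neg hij, if_pos rfl]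
  have hLk : ∀ u (k : Fin n) (hk : k ≠ j), k ≠ i → ∀ c : F, L u ⟨k, c⟩ = u ⟨⟨k, hk⟩, c⟩ := by
    intro u k hk hki c; rw [hL]; dsimp only; rw [dif_neg hk, if_neg hki]
  have hLsum : ∀ u, ∀ w ∈ S,
      (∑ k, L u ⟨k, w k⟩) = ∑ k : {k : Fin n // k ≠ j}, u ⟨k, w k.val⟩ := by
    intro u w hw
    rw [sum_split j (fun k => L u ⟨k, w k⟩)]
    have e : ∀ k : {k : Fin n // k ≠ j}, L u ⟨k.val, w k.val⟩
        = u ⟨k, w k.val⟩ - (if k = (⟨i, hij⟩ : {k : Fin n // k ≠ j})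
            then (if x ⟨j, lam * w i⟩ = 0 then 0 else u ⟨⟨i, hij⟩, w i⟩) else 0) := by
      intro k
      by_cases hk : k = ⟨i, hij⟩
      · rw [hk]
        show L u ⟨i, w i⟩ = u ⟨⟨i, hij⟩, w i⟩ - (if (⟨i, hij⟩ : {k : Fin n // k ≠ j}) = ⟨i, hij⟩
            then (if x ⟨j, lam * w i⟩ = 0 then 0 else u ⟨⟨i, hij⟩, w i⟩) else 0)
        rw [hLi u (w i), if_pos rfl]
        by_cases hc : x ⟨j, lam * w i⟩ = 0
        · rw [if_pos hc, if_pos hc, sub_zero]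
        · rw [if_neg hc, if_neg hc, sub_self]
      · have hkv : k.val ≠ i := fun h => hk (Subtype.ext h)
        rw [hLk u k.val k.prop hkv, if_neg hk, sub_zero]
    simp only [e]
    rw [Finset.sum_sub_distrib, Finset.sum_ite_eq' Finset.univ]
    simp only [Finset.mem_univ, if_true]
    rw [hLj u (w j), hlam w hw]
    have hlc : lam⁻¹ * (lam * w i) = w i := by field_simp
    rw [hlc]
    by_cases hc : x ⟨j, lam * w i⟩ = 0
    · rw [if_pos hc]; ring
    · rw [if_neg hc]; ring
  have hLmem : ∀ u, MemQ (multSub (S.map (LinearMap.funLeft F F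
      (Subtype.val : {k : Fin n // k ≠ j} → Fin n)))) u → MemQ (multSub S) (L u) := by
    intro u hu
    have hum := (memQ_proj S j u).1 hu
    rw [memQ_multSub]
    refine ⟨?_, fun w hw => ?_⟩
    · rintro ⟨k, c⟩
      by_cases hk : k = j
      · subst hk; rw [hLj]
        split
        · exact le_refl 0
        · exact hum.1 _
      · by_cases hki : k = i
        · subst hki; rw [hLi]
          split
          · exact hum.1 _
          · exact le_refl 0
        · rw [hLk u k hk hki]; exact hum.1 _
    · rw [hLsum u w hw]; exact hum.2 w hw
  have hYext : IsExtremePt (multSub (S.map (LinearMap.funLeft F F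
      (Subtype.val : {k : Fin n // k ≠ j} → Fin n)))) Y := by
    refine ⟨hYmem, fun u w hu hw huw => ?_⟩
    have hxdec : x = fun v => (L u v + L w v) / 2 := by
      funext p
      obtain ⟨k, c⟩ := p
      show x ⟨k, c⟩ = (L u ⟨k, c⟩ + L w ⟨k, c⟩) / 2
      by_cases hk : k = j
      · subst hk
        by_cases hc : x ⟨k, c⟩ = 0
        · rw [hLj u c, hLj w c, if_pos hc, if_pos hc, hc]; norm_num
        · rw [hLj u c, hLj w c, if_neg hc, if_neg hc]
          have h1 := congrFun huw ⟨⟨i, hij⟩, lam⁻¹ * c⟩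
          rw [hYi (lam⁻¹ * c) hij] at h1
          have hlc : lam * (lam⁻¹ * c) = c := by field_simp
          rw [hlc] at h1
          have h0 : x ⟨i, lam⁻¹ * c⟩ = 0 := by
            rcases dich (lam⁻¹ * c) with h | h
            · exact h
            · rw [hlc] at h; exact absurd h hc
          rw [h0, zero_add] at h1
          exact h1
      · by_cases hki : k = i
        · subst hki
          by_cases hc : x ⟨j, lam * c⟩ = 0
          · rw [hLi u c, hLi w c, if_pos hc, if_pos hc]
            have h1 := congrFun huw ⟨⟨k, hk⟩, c⟩
            rw [hYi c hk, hc, add_zero] at h1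
            exact h1
          · rw [hLi u c, hLi w c, if_neg hc, if_neg hc,
              (dich c).resolve_right hc]
            norm_num
        · rw [hLk u k hk hki, hLk w k hk hki]
          have h1 := congrFun huw ⟨⟨k, hk⟩, c⟩
          rw [hYk ⟨k, hk⟩ hki c] at h1
          exact h1
    have hLeq : L u = L w := hx.2 _ _ (hLmem u hu) (hLmem w hw) hxdec
    funext p
    obtain ⟨⟨k, hk⟩, c⟩ := p
    by_cases hki : k = i
    · subst hki
      by_cases hc : x ⟨j, lam * c⟩ = 0
      · have h1 := congrFun hLeq ⟨k, c⟩
        rw [hLi u c, hLi w c, if_pos hc, if_pos hc] at h1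
        exact h1
      · have h1 := congrFun hLeq ⟨j, lam * c⟩
        rw [hLj u (lam * c), hLj w (lam * c), if_neg hc, if_neg hc] at h1
        have hlc : lam⁻¹ * (lam * c) = c := by field_simp
        rw [hlc] at h1
        exact h1
    · have h1 := congrFun hLeq ⟨k, c⟩
      rw [hLk u k hk hki, hLk w k hk hki] at h1
      exact h1
  have hint := h' Y hYext
  obtain ⟨k, c⟩ := v
  by_cases hk : k = j
  · subst hk
    by_cases hc : x ⟨k, c⟩ = 0
    · exact ⟨0, by rw [hc]; norm_num⟩
    · obtain ⟨m, hm⟩ := hint ⟨⟨i, hij⟩, lam⁻¹ * c⟩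
      rw [hYi (lam⁻¹ * c) hij] at hm
      have hlc : lam * (lam⁻¹ * c) = c := by field_simp
      rw [hlc] at hm
      have h0 : x ⟨i, lam⁻¹ * c⟩ = 0 := by
        rcases dich (lam⁻¹ * c) with h | h
        · exact h
        · rw [hlc] at h; exact absurd h hc
      rw [h0, zero_add] at hm
      exact ⟨m, hm⟩
  · by_cases hki : k = i
    · subst hki
      by_cases hc : x ⟨j, lam * c⟩ = 0
      · obtain ⟨m, hm⟩ := hint ⟨⟨k, hk⟩, c⟩
        rw [hYi c hk, hc, add_zero] at hm
        exact ⟨m, hm⟩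
      · exact ⟨0, by rw [(dich c).resolve_right hc]; norm_num⟩
    · obtain ⟨m, hm⟩ := hint ⟨⟨k, hk⟩, c⟩
      rw [hYk ⟨k, hk⟩ hki c] at hm
      exact ⟨m, hm⟩

/-- let `S ⊆ GF(q)^n` be a subspace with coordinates `i ≠ j` in series in
`Matroid(S)` (every circuit contains both or neither), and let `S'` be the projection of
`S` dropping coordinate `j`.  Then `mult S` is ideal iff `mult S'` is ideal. -/
theorem stmt19 {F : Type*} [Field F] [Fintype F] {n : ℕ} (S : Submodule F (Fin n → F))
    (i j : Fin n) (hij : i ≠ j)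
    (hseries : ∀ C ∈ circuitSet S, i ∈ C ↔ j ∈ C) :
    IdealClutter (multSub S) ↔
      IdealClutter (multSub
        (S.map (LinearMap.funLeft F F (Subtype.val : {k : Fin n // k ≠ j} → Fin n)))) := by
  obtain ⟨lam, hlam0, hlam⟩ := lambda_exists S i j hseries
  exact ⟨fun h => dir1 S j h, fun h => dir2 S i j hij lam hlam0 hlam h⟩
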